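/- Let $L$ be a finite lattice, $P = L \setminus \{\hat{0}, \hat{1}\}$, and $y \in P$. Then the order complex of $P \setminus Co(y)$ is contractible, where $Co(y)$ is the set of complements of $y$. -/

import Mathlib

open Function

/-- The (geometric realization of the) order complex of a poset `P`:
finitely supported probability weight functions whose support is a chain. -/
def orderComplex (P : Type*) [PartialOrder P] : Set (P → ℝ) :=
  {w | (∀ p, 0 ≤ w p) ∧ (support w).Finite ∧ ∑ᶠ p, w p = 1 ∧
    IsChain (· ≤ ·) (support w)}

instance (P : Type*) [PartialOrder P] : TopologicalSpace ↥(orderComplex P) :=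
  inferInstance

namespace BW

open Classical in
noncomputable def dirac {T : Type} (v : T) : T → ℝ := fun q => if q = v then 1 else 0

variable {T : Type} [PartialOrder T] [Fintype T]

/-- subcomplex of the order complex with vertices in `V` -/
def cx (V : Set T) : Set (T → ℝ) :=
  {w | (∀ p, 0 ≤ w p) ∧ support w ⊆ V ∧ (∑ p, w p) = 1 ∧ IsChain (· ≤ ·) (support w)}

lemma cx_mono {V V' : Set T} (h : V ⊆ V') : cx V ⊆ cx V' :=
  fun w hw => ⟨hw.1, hw.2.1.trans h, hw.2.2⟩

lemma cx_nonneg {V : Set T} {w : T → ℝ} (hw : w ∈ cx V) (q : T) : 0 ≤ w q := hw.1 q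

lemma cx_le_one {V : Set T} {w : T → ℝ} (hw : w ∈ cx V) (q : T) : w q ≤ 1 := by
  have := Finset.single_le_sum (f := w) (fun i _ => hw.1 i) (Finset.mem_univ q)
  rw [hw.2.2.1] at this; exact this

lemma dirac_mem {V : Set T} {v : T} (hv : v ∈ V) : dirac v ∈ cx V := by
  have hs : support (dirac v) ⊆ {v} := by
    intro q hq
    simp only [dirac, mem_support, ne_eq] at hq
    by_contra h
    exact hq (if_neg h)
  refine ⟨fun p => ?_, hs.trans (by simpa using hv), ?_, ?_⟩
  · unfold dirac; split <;> norm_num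
  · classical simp [dirac]
  · intro a ha b hb hne
    exact absurd ((hs ha).trans (hs hb).symm) hne

open Classical in
/-- mass strictly below `x` -/
noncomputable def below (w : T → ℝ) (x : T) : ℝ := ∑ p ∈ Finset.univ.filter (fun p => p < x), w p

lemma below_nonneg {V : Set T} {w : T → ℝ} (hw : w ∈ cx V) (x : T) : 0 ≤ below w x :=
  Finset.sum_nonneg fun i _ => hw.1 i

open Classical in
lemma below_insert (w : T → ℝ) (x : T) :
    ∑ p ∈ insert x (Finset.univ.filter (fun p => p < x)), w p = w x + below w x := by
  rw [Finset.sum_insert (by simp)]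
  rfl

open Classical in
lemma below_add_le_one {V : Set T} {w : T → ℝ} (hw : w ∈ cx V) (x : T) :
    below w x + w x ≤ 1 := by
  have h2 : ∑ p ∈ insert x (Finset.univ.filter (fun p => p < x)), w p ≤ 1 := by
    rw [← hw.2.2.1]
    exact Finset.sum_le_sum_of_subset_of_nonneg (Finset.subset_univ _) (fun i _ _ => hw.1 i)
  rw [below_insert] at h2; linarith

open Classical in
lemma below_add_le_below {V : Set T} {w : T → ℝ} (hw : w ∈ cx V) {a b : T} (hab : a < b) :
    below w a + w a ≤ below w b := by
  have h2 : ∑ p ∈ insert a (Finset.univ.filter (fun p => p < a)), w p ≤ below w b := by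
    refine Finset.sum_le_sum_of_subset_of_nonneg ?_ (fun i _ _ => hw.1 i)
    intro p hp
    rcases Finset.mem_insert.mp hp with h | h
    · subst h; simp [hab]
    · simp only [Finset.mem_filter, Finset.mem_univ, true_and] at h ⊢
      exact h.trans hab
  rw [below_insert] at h2; linarith

noncomputable def mfun (w : T → ℝ) (t : ℝ) (x : T) : ℝ := min (w x) (max (t - below w x) 0)

lemma mfun_nonneg {V : Set T} {w : T → ℝ} (hw : w ∈ cx V) (t : ℝ) (x : T) :
    0 ≤ mfun w t x := le_min (hw.1 x) (le_max_right _ _)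

lemma mfun_le (w : T → ℝ) (t : ℝ) (x : T) : mfun w t x ≤ w x := min_le_left _ _

open Classical in
noncomputable def pushFun (g : T → T) (w : T → ℝ) : T → ℝ :=
  fun q => ∑ x, if g x = q then w x else 0

open Classical in
noncomputable def sweepFun (f g : T → T) (w : T → ℝ) (t : ℝ) : T → ℝ :=
  fun q => ∑ x, ((w x - mfun w t x) * (if g x = q then 1 else 0)
      + mfun w t x * (if f x = q then 1 else 0))

lemma pushFun_id (w : T → ℝ) : pushFun (fun x => x) w = w := by
  classical
  funext q
  simp [pushFun]

lemma pushFun_const {V : Set T} {w : T → ℝ} (hw : w ∈ cx V) (z : T) :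
    pushFun (fun _ => z) w = dirac z := by
  classical
  funext q
  unfold pushFun dirac
  by_cases h : z = q
  · subst h; simp [hw.2.2.1]
  · rw [if_neg (fun h' => h h'.symm)]
    simp [h]

lemma sweepFun_zero {V : Set T} {w : T → ℝ} (hw : w ∈ cx V) (f g : T → T) :
    sweepFun f g w 0 = pushFun g w := by
  classical
  funext q
  unfold sweepFun pushFun
  refine Finset.sum_congr rfl fun x _ => ?_
  have hm : mfun w 0 x = 0 := by
    unfold mfun
    have h1 : max (0 - below w x) 0 = 0 :=
      max_eq_right (by simpa using below_nonneg hw x)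
    rw [h1]
    exact min_eq_right (hw.1 x)
  rw [hm]
  by_cases h1 : g x = q <;> simp [h1]

lemma sweepFun_one {V : Set T} {w : T → ℝ} (hw : w ∈ cx V) (f g : T → T) :
    sweepFun f g w 1 = pushFun f w := by
  classical
  funext q
  unfold sweepFun pushFun
  refine Finset.sum_congr rfl fun x _ => ?_
  have hm : mfun w 1 x = w x := by
    unfold mfun
    have h1 : w x ≤ 1 - below w x := by
      have := below_add_le_one hw x; linarith
    exact min_eq_left (h1.trans (le_max_left _ _))
  rw [hm]
  by_cases h1 : f x = q <;> simp [h1]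


open Classical in
lemma sweepFun_mem {V : Set T} {f g : T → T}
    (hfV : ∀ v ∈ V, f v ∈ V) (hgV : ∀ v ∈ V, g v ∈ V)
    (hfm : ∀ a ∈ V, ∀ b ∈ V, a ≤ b → f a ≤ f b)
    (hgm : ∀ a ∈ V, ∀ b ∈ V, a ≤ b → g a ≤ g b)
    (hfg : ∀ v ∈ V, f v ≤ g v)
    {w : T → ℝ} (hw : w ∈ cx V) (t : ℝ) :
    sweepFun f g w t ∈ cx V := by
  have hm0 : ∀ x, 0 ≤ mfun w t x := fun x => mfun_nonneg hw t x
  have hmw : ∀ x, mfun w t x ≤ w x := fun x => mfun_le w t x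
  -- witnesses for support membership
  have hwit : ∀ q, sweepFun f g w t q ≠ 0 →
      ∃ x, x ∈ support w ∧
        ((mfun w t x < w x ∧ g x = q) ∨ (0 < mfun w t x ∧ f x = q)) := by
    intro q hq
    obtain ⟨x, -, hx⟩ := Finset.exists_ne_zero_of_sum_ne_zero hq
    have hor : (w x - mfun w t x) * (if g x = q then 1 else 0) ≠ 0 ∨
        mfun w t x * (if f x = q then 1 else 0) ≠ 0 := by
      by_contra hc
      push_neg at hc
      exact hx (by rw [hc.1, hc.2]; ring)
    rcases hor with h | h
    · rcases mul_ne_zero_iff.mp h with ⟨h1, h2⟩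
      have hgq : g x = q := by by_contra hcc; exact h2 (if_neg hcc)
      have hlt : mfun w t x < w x :=
        lt_of_le_of_ne (hmw x) (fun h' => h1 (by rw [h']; ring))
      have hxs : x ∈ support w := by
        simp only [mem_support]
        exact fun h0 => absurd (lt_of_le_of_lt (hm0 x) hlt) (by rw [h0]; simp)
      exact ⟨x, hxs, Or.inl ⟨hlt, hgq⟩⟩
    · rcases mul_ne_zero_iff.mp h with ⟨h1, h2⟩
      have hfq : f x = q := by by_contra hcc; exact h2 (if_neg hcc)
      have hpos : 0 < mfun w t x := lt_of_le_of_ne (hm0 x) (Ne.symm h1)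
      have hxs : x ∈ support w := by
        simp only [mem_support]
        exact fun h0 => absurd (lt_of_lt_of_le hpos (hmw x)) (by rw [h0]; simp)
      exact ⟨x, hxs, Or.inr ⟨hpos, hfq⟩⟩
  -- comparability of witnesses
  have hcomp : ∀ {a b : T}, a ∈ support w → b ∈ support w → a ≤ b ∨ b ≤ a := by
    intro a b ha hb
    rcases eq_or_ne a b with h | h
    · exact Or.inl (le_of_eq h)
    · exact hw.2.2.2 ha hb h
  -- the key scheduling fact
  have key : ∀ {x₁ x₂ : T}, x₁ ∈ support w → x₂ ∈ support w →
      mfun w t x₁ < w x₁ → 0 < mfun w t x₂ → x₂ ≤ x₁ := by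
    intro x₁ x₂ h₁ h₂ hA hB
    rcases hcomp h₂ h₁ with h | h
    · exact h
    rcases eq_or_ne x₁ x₂ with he | hne
    · exact le_of_eq he.symm
    have hlt : x₁ < x₂ := lt_of_le_of_ne h hne
    exfalso
    have hBmax : 0 < max (t - below w x₂) 0 := lt_of_lt_of_le hB (min_le_right _ _)
    have ht2 : below w x₂ < t := by
      by_contra hcc
      push_neg at hcc
      have : max (t - below w x₂) 0 = 0 := max_eq_right (by linarith)
      rw [this] at hBmax; exact lt_irrefl _ hBmax
    have hb : below w x₁ + w x₁ ≤ below w x₂ := below_add_le_below hw hlt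
    have : w x₁ ≤ mfun w t x₁ := by
      have h1 : w x₁ ≤ t - below w x₁ := by linarith
      exact le_min (le_refl _) (h1.trans (le_max_left _ _))
    linarith
  refine ⟨?_, ?_, ?_, ?_⟩
  · -- nonneg
    intro q
    apply Finset.sum_nonneg
    intro x _
    have h1 : (0:ℝ) ≤ (if g x = q then (1:ℝ) else 0) := by split <;> norm_num
    have h2 : (0:ℝ) ≤ (if f x = q then (1:ℝ) else 0) := by split <;> norm_num
    exact add_nonneg (mul_nonneg (sub_nonneg.mpr (hmw x)) h1)
      (mul_nonneg (hm0 x) h2)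
  · -- support
    intro q hq
    obtain ⟨x, hxs, hcase⟩ := hwit q hq
    have hxV : x ∈ V := hw.2.1 hxs
    rcases hcase with ⟨-, hgq⟩ | ⟨-, hfq⟩
    · rw [← hgq]; exact hgV x hxV
    · rw [← hfq]; exact hfV x hxV
  · -- total mass
    unfold sweepFun
    rw [Finset.sum_comm]
    have h1 : ∀ x : T, (∑ q, ((w x - mfun w t x) * (if g x = q then 1 else 0)
        + mfun w t x * (if f x = q then 1 else 0))) = w x := by
      intro x
      rw [Finset.sum_add_distrib, ← Finset.mul_sum, ← Finset.mul_sum]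
      have e1 : (∑ q, (if g x = q then (1:ℝ) else 0)) = 1 := by simp
      have e2 : (∑ q, (if f x = q then (1:ℝ) else 0)) = 1 := by simp
      rw [e1, e2]; ring
    calc (∑ x, ∑ q, ((w x - mfun w t x) * (if g x = q then 1 else 0)
        + mfun w t x * (if f x = q then 1 else 0)))
        = ∑ x, w x := Finset.sum_congr rfl (fun x _ => h1 x)
      _ = 1 := hw.2.2.1
  · -- chain
    intro q₁ hq₁ q₂ hq₂ hne
    obtain ⟨x₁, hx₁s, hc₁⟩ := hwit q₁ hq₁
    obtain ⟨x₂, hx₂s, hc₂⟩ := hwit q₂ hq₂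
    have hx₁V : x₁ ∈ V := hw.2.1 hx₁s
    have hx₂V : x₂ ∈ V := hw.2.1 hx₂s
    rcases hc₁ with ⟨hA₁, hg₁⟩ | ⟨hB₁, hf₁⟩ <;> rcases hc₂ with ⟨hA₂, hg₂⟩ | ⟨hB₂, hf₂⟩
    · subst hg₁; subst hg₂
      rcases hcomp hx₁s hx₂s with h | h
      · exact Or.inl (hgm _ hx₁V _ hx₂V h)
      · exact Or.inr (hgm _ hx₂V _ hx₁V h)
    · -- q₁ = g x₁ with slack, q₂ = f x₂ moved: x₂ ≤ x₁
      subst hg₁; subst hf₂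
      have h := key hx₁s hx₂s hA₁ hB₂
      exact Or.inr ((hfm _ hx₂V _ hx₁V h).trans (hfg _ hx₁V))
    · subst hf₁; subst hg₂
      have h := key hx₂s hx₁s hA₂ hB₁
      exact Or.inl ((hfm _ hx₁V _ hx₂V h).trans (hfg _ hx₂V))
    · subst hf₁; subst hf₂
      rcases hcomp hx₁s hx₂s with h | h
      · exact Or.inl (hfm _ hx₁V _ hx₂V h)
      · exact Or.inr (hfm _ hx₂V _ hx₁V h)

lemma pushFun_mem {V : Set T} {g : T → T}
    (hgV : ∀ v ∈ V, g v ∈ V) (hgm : ∀ a ∈ V, ∀ b ∈ V, a ≤ b → g a ≤ g b)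
    {w : T → ℝ} (hw : w ∈ cx V) : pushFun g w ∈ cx V := by
  have h := sweepFun_mem (f := g) (g := g) hgV hgV hgm hgm (fun v _ => le_rfl) hw 0
  rwa [sweepFun_zero hw g g] at h

lemma continuous_below (x : T) : Continuous (fun w : T → ℝ => below w x) := by
  unfold below
  exact continuous_finset_sum _ (fun p _ => continuous_apply p)

lemma continuous_sweepFun (f g : T → T) :
    Continuous (fun a : (T → ℝ) × ℝ => sweepFun f g a.1 a.2) := by
  apply continuous_pi
  intro q
  unfold sweepFun
  apply continuous_finset_sum
  intro x _
  have hwx : Continuous (fun a : (T → ℝ) × ℝ => a.1 x) :=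
    (continuous_apply x).comp continuous_fst
  have hb : Continuous (fun a : (T → ℝ) × ℝ => below a.1 x) :=
    (continuous_below x).comp continuous_fst
  have hmc : Continuous (fun a : (T → ℝ) × ℝ => mfun a.1 a.2 x) := by
    unfold mfun
    exact hwx.min (((continuous_snd.sub hb).max continuous_const))
  exact ((hwx.sub hmc).mul continuous_const).add (hmc.mul continuous_const)

lemma continuous_pushFun (g : T → T) : Continuous (fun w : T → ℝ => pushFun g w) := by
  apply continuous_pi
  intro q
  unfold pushFun
  apply continuous_finset_sum
  intro x _
  by_cases h : g x = q
  · simpa [h] using (continuous_apply x)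
  · simp [h]
    exact continuous_const

noncomputable def pushCM (V : Set T) (g : T → T)
    (hgV : ∀ v ∈ V, g v ∈ V) (hgm : ∀ a ∈ V, ∀ b ∈ V, a ≤ b → g a ≤ g b) :
    C(↥(cx V), ↥(cx V)) :=
  ⟨fun w => ⟨pushFun g w.1, pushFun_mem hgV hgm w.2⟩,
   (((continuous_pushFun g).comp continuous_subtype_val)).subtype_mk _⟩

noncomputable def sweepHomotopy (V : Set T) (f g : T → T)
    (hfV : ∀ v ∈ V, f v ∈ V) (hgV : ∀ v ∈ V, g v ∈ V)
    (hfm : ∀ a ∈ V, ∀ b ∈ V, a ≤ b → f a ≤ f b)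
    (hgm : ∀ a ∈ V, ∀ b ∈ V, a ≤ b → g a ≤ g b)
    (hfg : ∀ v ∈ V, f v ≤ g v) :
    (pushCM V g hgV hgm).Homotopy (pushCM V f hfV hfm) := by
  have hcont : Continuous (fun (a : ↥unitInterval × ↥(cx V)) =>
      sweepFun f g a.2.1 (a.1 : ℝ)) := by
    have h1 : Continuous (fun (a : ↥unitInterval × ↥(cx V)) =>
        (((a.2 : T → ℝ), (a.1 : ℝ)) : (T → ℝ) × ℝ)) :=
      (continuous_subtype_val.comp continuous_snd).prodMk
        (continuous_subtype_val.comp continuous_fst)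
    exact (continuous_sweepFun f g).comp h1
  refine ContinuousMap.Homotopy.mk
    ⟨fun (a : ↥unitInterval × ↥(cx V)) =>
      (⟨sweepFun f g a.2.1 (a.1 : ℝ),
        sweepFun_mem hfV hgV hfm hgm hfg a.2.2 _⟩ : ↥(cx V)),
      hcont.subtype_mk _⟩ ?_ ?_
  · intro w
    apply Subtype.ext
    simpa [pushCM] using sweepFun_zero w.2 f g
  · intro w
    apply Subtype.ext
    simpa [pushCM] using sweepFun_one w.2 f g

lemma conical_nullhomotopic (V : Set T) (z : T) (hz : z ∈ V) (G : T → T)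
    (hGV : ∀ v ∈ V, G v ∈ V)
    (hGm : ∀ a ∈ V, ∀ b ∈ V, a ≤ b → G a ≤ G b)
    (hidG : ∀ v ∈ V, v ≤ G v) (hzG : ∀ v ∈ V, z ≤ G v) :
    (ContinuousMap.id ↥(cx V)).Nullhomotopic := by
  have hidV : ∀ v ∈ V, (fun (x : T) => x) v ∈ V := fun v hv => hv
  have hidm : ∀ a ∈ V, ∀ b ∈ V, a ≤ b → (fun (x : T) => x) a ≤ (fun (x : T) => x) b :=
    fun a _ b _ h => h
  have hzV : ∀ v ∈ V, (fun (_ : T) => z) v ∈ V := fun v _ => hz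
  have hzm : ∀ a ∈ V, ∀ b ∈ V, a ≤ b → (fun (_ : T) => z) a ≤ (fun (_ : T) => z) b :=
    fun a _ b _ _ => le_rfl
  have H1 := sweepHomotopy V (fun x => x) G hidV hGV hidm hGm hidG
  have H2 := sweepHomotopy V (fun _ => z) G hzV hGV hzm hGm hzG
  have e1 : pushCM V (fun x => x) hidV hidm = ContinuousMap.id _ := by
    ext w : 1
    exact Subtype.ext (pushFun_id w.1)
  have e2 : pushCM V (fun _ => z) hzV hzm
      = ContinuousMap.const _ (⟨dirac z, dirac_mem hz⟩ : ↥(cx V)) := by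
    ext w : 1
    exact Subtype.ext (pushFun_const w.2 z)
  exact ⟨⟨dirac z, dirac_mem hz⟩, ⟨(H1.symm.trans H2).cast e1 e2⟩⟩


open Classical in
lemma cx_eq_dirac {V : Set T} {e : T} {w : T → ℝ} (hw : w ∈ cx V) (h1 : w e = 1) :
    w = dirac e := by
  funext q
  unfold dirac
  by_cases hq : q = e
  · subst hq; simp [h1]
  · rw [if_neg hq]
    have hp : w e + w q = ∑ x ∈ ({e, q} : Finset T), w x := (Finset.sum_pair (Ne.symm hq)).symm
    have hle : ∑ x ∈ ({e, q} : Finset T), w x ≤ 1 := by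
      rw [← hw.2.2.1]
      exact Finset.sum_le_sum_of_subset_of_nonneg (Finset.subset_univ _) (fun i _ _ => hw.1 i)
    have h0 := hw.1 q
    rw [← hp, h1] at hle
    linarith

open Classical in
lemma collapse (V : Set T) (e : T) (he : e ∈ V)
    (hlink : (ContinuousMap.id ↥(cx {x | x ∈ V ∧ (x < e ∨ e < x)})).Nullhomotopic)
    (hrest : (ContinuousMap.id ↥(cx (V \ {e}))).Nullhomotopic) :
    (ContinuousMap.id ↥(cx V)).Nullhomotopic := by
  classical
  set Lk : Set T := {x | x ∈ V ∧ (x < e ∨ e < x)} with hLk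
  obtain ⟨p, ⟨K⟩⟩ := hlink
  obtain ⟨p₂, ⟨M⟩⟩ := hrest
  have hLkV : Lk ⊆ V \ {e} := by
    intro x hx
    refine ⟨hx.1, ?_⟩
    rcases hx.2 with h | h
    · exact ne_of_lt h
    · exact (ne_of_lt h).symm
  have hcxLkV : cx Lk ⊆ cx (V \ {e}) := cx_mono hLkV
  have hince : cx (V \ {e}) ⊆ cx V := cx_mono Set.diff_subset
  -- star predicate
  set starP : (T → ℝ) → Prop := fun w => ∀ x, x ≠ e → x ∉ Lk → w x = 0 with hstarP
  have hstar_of_ne : ∀ {w : T → ℝ}, w ∈ cx V → w e ≠ 0 → starP w := by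
    intro w hw hwe x hxe hxLk
    by_contra hx
    have hxs : x ∈ support w := hx
    have hes : e ∈ support w := hwe
    have hcomp : x ≤ e ∨ e ≤ x := hw.2.2.2 hxs hes hxe
    apply hxLk
    refine ⟨hw.2.1 hxs, ?_⟩
    rcases hcomp with h | h
    · exact Or.inl (lt_of_le_of_ne h hxe)
    · exact Or.inr (lt_of_le_of_ne h (Ne.symm hxe))
  -- the normalized link part
  set xr : (T → ℝ) → (T → ℝ) := fun w q => if q = e then 0 else w q / (1 - w e) with hxr
  have hxr_mem : ∀ {w : T → ℝ}, w ∈ cx V → w e ≠ 1 → starP w → xr w ∈ cx Lk := by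
    intro w hw h1 hsp
    have hlt : w e < 1 := lt_of_le_of_ne (cx_le_one hw e) h1
    have hpos : 0 < 1 - w e := by linarith
    have hsupp : support (xr w) ⊆ Lk := by
      intro q hq
      simp only [hxr, mem_support] at hq
      by_cases hqe : q = e
      · rw [if_pos hqe] at hq; exact absurd rfl hq
      · rw [if_neg hqe] at hq
        have hwq : w q ≠ 0 := fun h => hq (by rw [h]; simp)
        by_contra hqLk
        exact hwq (hsp q hqe hqLk)
    refine ⟨?_, hsupp, ?_, ?_⟩
    · intro q
      simp only [hxr]
      split
      · exact le_refl 0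
      · exact div_nonneg (hw.1 q) hpos.le
    · have h2 : ∀ q, xr w q = (if q = e then 0 else w q) * (1 - w e)⁻¹ := by
        intro q; simp only [hxr]; split
        · ring
        · rw [div_eq_mul_inv]
      have h3 : ∀ q, (if q = e then (0:ℝ) else w q) = w q - (if q = e then w q else 0) := by
        intro q; split <;> ring
      calc (∑ q, xr w q) = ∑ q, (if q = e then 0 else w q) * (1 - w e)⁻¹ :=
            Finset.sum_congr rfl (fun q _ => h2 q)
        _ = (∑ q, (if q = e then 0 else w q)) * (1 - w e)⁻¹ := by
            rw [Finset.sum_mul]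
        _ = (1 - w e) * (1 - w e)⁻¹ := by
            congr 1
            rw [Finset.sum_congr rfl (fun q _ => h3 q), Finset.sum_sub_distrib, hw.2.2.1]
            congr 1
            simp
        _ = 1 := mul_inv_cancel₀ (ne_of_gt hpos)
    · refine IsChain.mono ?_ hw.2.2.2
      intro q hq
      simp only [hxr, mem_support] at hq
      by_cases hqe : q = e
      · rw [if_pos hqe] at hq; exact absurd rfl hq
      · rw [if_neg hqe] at hq
        simp only [mem_support]
        exact fun h => hq (by rw [h]; simp)
  -- time rescaling
  set ψf : (T → ℝ) → ℝ → ℝ := fun w t => min 1 (w e * t / (1 - w e)) with hψf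
  have hψ_mem : ∀ {w : T → ℝ}, w ∈ cx V → ∀ {t : ℝ}, 0 ≤ t → ψf w t ∈ unitInterval := by
    intro w hw t ht
    constructor
    · refine le_min zero_le_one (div_nonneg (mul_nonneg (hw.1 e) ht) ?_)
      have := cx_le_one hw e; linarith
    · exact min_le_left _ _
  -- the deformed link point
  set κ : ↥(cx V) → ↥unitInterval → ↥(cx Lk) := fun w t =>
    if h : (w : T → ℝ) e ≠ 1 ∧ starP (w : T → ℝ) then
      K (⟨ψf (w : T → ℝ) (t : ℝ), hψ_mem w.2 t.2.1⟩, ⟨xr (w : T → ℝ), hxr_mem w.2 h.1 h.2⟩)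
    else p
    with hκ
  -- the star formula
  set SF : ↥unitInterval × ↥(cx V) → (T → ℝ) := fun a =>
    ((1 - (a.1 : ℝ)) * ((a.2 : T → ℝ) e)) • dirac e
      + (1 - (1 - (a.1 : ℝ)) * ((a.2 : T → ℝ) e)) • (κ a.2 a.1 : T → ℝ)
    with hSF
  -- membership of mixtures
  have hmix : ∀ (c : ℝ), 0 ≤ c → c ≤ 1 → ∀ {v : T → ℝ}, v ∈ cx Lk →
      (c • dirac e + (1 - c) • v) ∈ cx V := by
    intro c hc0 hc1 v hv
    have hwit : ∀ q, (c • dirac e + (1 - c) • v) q ≠ 0 → q = e ∨ q ∈ support v := by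
      intro q hq
      simp only [Pi.add_apply, Pi.smul_apply, smul_eq_mul] at hq
      have hor : dirac e q ≠ 0 ∨ v q ≠ 0 := by
        by_contra hcc; push_neg at hcc
        exact hq (by rw [hcc.1, hcc.2]; ring)
      rcases hor with h | h
      · left
        by_contra hqe
        exact h (if_neg hqe)
      · exact Or.inr h
    refine ⟨?_, ?_, ?_, ?_⟩
    · intro q
      simp only [Pi.add_apply, Pi.smul_apply, smul_eq_mul]
      have hd : 0 ≤ dirac e q := (dirac_mem (V := V) he).1 q
      exact add_nonneg (mul_nonneg hc0 hd) (mul_nonneg (by linarith) (hv.1 q))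
    · intro q hq
      rcases hwit q hq with h | h
      · exact h ▸ he
      · exact (hLkV (hv.2.1 h)).1
    · simp only [Pi.add_apply, Pi.smul_apply, smul_eq_mul]
      rw [Finset.sum_add_distrib, ← Finset.mul_sum, ← Finset.mul_sum,
        (dirac_mem (V := V) he).2.2.1, hv.2.2.1]
      ring
    · intro a ha b hb hne
      have ha' := hwit a ha
      have hb' := hwit b hb
      have hLkc : ∀ x ∈ support v, x ≤ e ∨ e ≤ x := by
        intro x hx
        rcases (hv.2.1 hx).2 with h | h
        · exact Or.inl h.le
        · exact Or.inr h.le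
      rcases ha' with ha' | ha' <;> rcases hb' with hb' | hb'
      · exact absurd (ha'.trans hb'.symm) hne
      · subst ha'
        rcases hLkc b hb' with h | h
        · exact Or.inr h
        · exact Or.inl h
      · subst hb'
        rcases hLkc a ha' with h | h
        · exact Or.inl h
        · exact Or.inr h
      · exact hv.2.2.2 ha' hb' hne
  have hSFmem : ∀ a, SF a ∈ cx V := by
    intro a
    have ht0 : (0:ℝ) ≤ (a.1 : ℝ) := a.1.2.1
    have ht1 : (a.1 : ℝ) ≤ 1 := a.1.2.2
    have hs0 : (0:ℝ) ≤ (a.2 : T → ℝ) e := a.2.2.1 e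
    have hs1 : (a.2 : T → ℝ) e ≤ 1 := cx_le_one a.2.2 e
    have hc0 : 0 ≤ (1 - (a.1:ℝ)) * ((a.2 : T → ℝ) e) := mul_nonneg (by linarith) hs0
    have hc1 : (1 - (a.1:ℝ)) * ((a.2:T→ℝ) e) ≤ 1 := by nlinarith
    exact hmix _ hc0 hc1 (κ a.2 a.1).2
  -- the full deformation
  set F : ↥unitInterval × ↥(cx V) → (T → ℝ) := fun a =>
    if (a.2 : T → ℝ) e = 0 then (a.2 : T → ℝ) else SF a with hF
  have hFmem : ∀ a, F a ∈ cx V := by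
    intro a
    simp only [hF]
    split
    · exact a.2.2
    · exact hSFmem a
  -- SF agrees with the identity when the e-mass vanishes (and we are in the star)
  have hSF_id : ∀ (a : ↥unitInterval × ↥(cx V)), (a.2 : T → ℝ) e = 0 →
      starP (a.2 : T → ℝ) → SF a = (a.2 : T → ℝ) := by
    intro a h0 hsp
    have hκval : κ a.2 a.1 = (⟨xr (a.2 : T → ℝ), hxr_mem a.2.2 (by rw [h0]; norm_num) hsp⟩ : ↥(cx Lk)) := by
      simp only [hκ]
      rw [dif_pos ⟨by rw [h0]; norm_num, hsp⟩]
      have hψ0 : (⟨ψf (a.2 : T → ℝ) (a.1 : ℝ), hψ_mem a.2.2 a.1.2.1⟩ : ↥unitInterval) = 0 := by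
        apply Subtype.ext
        simp only [hψf, h0]
        norm_num
      rw [hψ0]
      exact K.apply_zero _
    have hxrw : (κ a.2 a.1 : T → ℝ) = xr (a.2 : T → ℝ) := by rw [hκval]
    funext q
    simp only [hSF, Pi.add_apply, Pi.smul_apply, smul_eq_mul, hxrw, hxr, h0, mul_zero, zero_mul,
      sub_zero, div_one, zero_add, one_mul]
    by_cases hq : q = e
    · rw [if_pos hq, hq, h0]
    · rw [if_neg hq]
  -- endpoint t = 0
  have hF_zero : ∀ w : ↥(cx V), F (0, w) = (w : T → ℝ) := by
    intro w
    show (if ((w : T → ℝ)) e = 0 then ((w : T → ℝ)) else SF (0, w)) = (w : T → ℝ)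
    split
    · rfl
    · rename_i hne
      have hpr1 : (((0, w) : ↥unitInterval × ↥(cx V)).1 : ℝ) = 0 := by norm_num
      by_cases h1 : (w : T → ℝ) e = 1
      · -- apex : w = dirac e
        have hwd := cx_eq_dirac w.2 h1
        have hκv : κ w (0 : ↥unitInterval) = p := by
          simp only [hκ]
          rw [dif_neg]
          intro hc
          exact hc.1 h1
        funext q
        simp only [hSF, Pi.add_apply, Pi.smul_apply, smul_eq_mul, hκv, Set.Icc.coe_zero, h1]
        rw [hwd]
        ring
      · have hsp := hstar_of_ne w.2 hne
        have hκv : κ w (0 : ↥unitInterval)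
            = (⟨xr (w : T → ℝ), hxr_mem w.2 h1 hsp⟩ : ↥(cx Lk)) := by
          simp only [hκ]
          rw [dif_pos ⟨h1, hsp⟩]
          have hψ0 : (⟨ψf (w : T → ℝ) (((0 : ↥unitInterval)) : ℝ),
              hψ_mem w.2 (0 : ↥unitInterval).2.1⟩ : ↥unitInterval) = 0 := by
            apply Subtype.ext
            simp only [hψf]
            norm_num
          rw [hψ0]
          exact K.apply_zero _
        have hxrw : (κ w (0 : ↥unitInterval) : T → ℝ) = xr (w : T → ℝ) := by rw [hκv]
        have hlt : (w : T → ℝ) e < 1 := lt_of_le_of_ne (cx_le_one w.2 e) h1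
        have hpos : (0:ℝ) < 1 - (w : T → ℝ) e := by linarith
        funext q
        simp only [hSF, Pi.add_apply, Pi.smul_apply, smul_eq_mul, hxrw, hxr, Set.Icc.coe_zero,
          sub_zero, one_mul]
        by_cases hq : q = e
        · rw [if_pos hq, hq]
          simp [dirac]
        · rw [if_neg hq]
          simp only [dirac, if_neg hq]
          field_simp
          ring
  -- endpoint t = 1
  have hF_one_mem : ∀ w : ↥(cx V), F (1, w) ∈ cx (V \ {e}) := by
    intro w
    simp only [hF]
    split
    · rename_i h0
      refine ⟨w.2.1, ?_, w.2.2.2.1, w.2.2.2.2⟩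
      intro q hq
      refine ⟨w.2.2.1 hq, ?_⟩
      intro hqe
      rw [Set.mem_singleton_iff] at hqe
      subst hqe
      exact hq h0
    · have : SF (1, w) = (κ w 1 : T → ℝ) := by
        funext q
        simp only [hSF, Pi.add_apply, Pi.smul_apply, smul_eq_mul]
        rw [Set.Icc.coe_one]
        ring
      rw [this]
      exact hcxLkV (κ w 1).2
  -- topology of the star
  set Bad : Set T := {x | x ≠ e ∧ x ∉ Lk} with hBad
  set StarT : Set (↥unitInterval × ↥(cx V)) := {a | ∀ x ∈ Bad, (a.2 : T → ℝ) x = 0} with hStarT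
  have hStarT_iff : ∀ a : ↥unitInterval × ↥(cx V), a ∈ StarT ↔ starP ((a.2 : T → ℝ)) := by
    intro a
    constructor
    · intro h x hxe hxLk; exact h x ⟨hxe, hxLk⟩
    · intro h x hx; exact h x hx.1 hx.2
  have hStarT_closed : IsClosed StarT := by
    have heq : StarT = ⋂ x ∈ Bad, {a : ↥unitInterval × ↥(cx V) | (a.2 : T → ℝ) x = 0} := by
      ext a
      simp only [hStarT, Set.mem_setOf_eq, Set.mem_iInter]
    rw [heq]
    exact isClosed_biInter (fun x _ =>
      isClosed_eq ((continuous_apply x).comp (continuous_subtype_val.comp continuous_snd))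
        continuous_const)
  set U : Set (↥unitInterval × ↥(cx V)) := {a | ¬ ((a.2 : T → ℝ) e = 1)} with hU
  have hUopen : IsOpen U :=
    (isClosed_eq ((continuous_apply e).comp (continuous_subtype_val.comp continuous_snd))
      continuous_const).isOpen_compl
  have hsc : Continuous (fun a : ↥unitInterval × ↥(cx V) => ((a.2 : T → ℝ) e)) :=
    (continuous_apply e).comp (continuous_subtype_val.comp continuous_snd)
  have htc : Continuous (fun a : ↥unitInterval × ↥(cx V) => ((a.1 : ℝ))) :=
    continuous_subtype_val.comp continuous_fst
  have hc1 : Continuous (fun a : ↥unitInterval × ↥(cx V) => (1 - (a.1:ℝ)) * ((a.2 : T→ℝ) e)) :=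
    (continuous_const.sub htc).mul hsc
  -- continuity of κ off the apex
  have hκ_contOn : ContinuousOn
      (fun a : ↥unitInterval × ↥(cx V) => ((κ a.2 a.1 : ↥(cx Lk)) : T → ℝ)) (StarT ∩ U) := by
    rw [continuousOn_iff_continuous_restrict]
    have cs : Continuous (fun b : ↥(StarT ∩ U) => ((b.1.2 : T → ℝ) e)) :=
      (continuous_apply e).comp (continuous_subtype_val.comp
        (continuous_snd.comp continuous_subtype_val))
    have ct : Continuous (fun b : ↥(StarT ∩ U) => ((b.1.1 : ℝ))) :=
      continuous_subtype_val.comp (continuous_fst.comp continuous_subtype_val)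
    have cw : Continuous (fun b : ↥(StarT ∩ U) => ((b.1.2 : T → ℝ))) :=
      continuous_subtype_val.comp (continuous_snd.comp continuous_subtype_val)
    have hden : ∀ b : ↥(StarT ∩ U), (1 : ℝ) - (b.1.2 : T → ℝ) e ≠ 0 :=
      fun b => sub_ne_zero_of_ne (Ne.symm b.2.2)
    have hψc : Continuous (fun b : ↥(StarT ∩ U) =>
        (⟨ψf ((b.1.2 : T → ℝ)) ((b.1.1 : ℝ)), hψ_mem b.1.2.2 b.1.1.2.1⟩ : ↥unitInterval)) := by
      refine Continuous.subtype_mk ?_ _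
      simp only [hψf]
      exact continuous_const.min ((cs.mul ct).div (continuous_const.sub cs) hden)
    have hxc : Continuous (fun b : ↥(StarT ∩ U) =>
        (⟨xr ((b.1.2 : T → ℝ)), hxr_mem b.1.2.2 b.2.2 ((hStarT_iff _).mp b.2.1)⟩ : ↥(cx Lk))) := by
      refine Continuous.subtype_mk ?_ _
      apply continuous_pi
      intro q
      simp only [hxr]
      by_cases hq : q = e
      · simp only [if_pos hq]
        exact continuous_const
      · simp only [if_neg hq]
        exact ((continuous_apply q).comp cw).div (continuous_const.sub cs) hden
    have hKc : Continuous (fun b : ↥(StarT ∩ U) =>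
        ((K (⟨ψf ((b.1.2 : T → ℝ)) ((b.1.1 : ℝ)), hψ_mem b.1.2.2 b.1.1.2.1⟩,
          ⟨xr ((b.1.2 : T → ℝ)), hxr_mem b.1.2.2 b.2.2 ((hStarT_iff _).mp b.2.1)⟩) : ↥(cx Lk))
          : T → ℝ)) :=
      continuous_subtype_val.comp (K.continuous.comp (hψc.prodMk hxc))
    refine hKc.congr ?_
    intro b
    show _ = ((κ b.1.2 b.1.1 : ↥(cx Lk)) : T → ℝ)
    simp only [hκ]
    rw [dif_pos ⟨b.2.2, (hStarT_iff _).mp b.2.1⟩]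
  -- continuity of the star formula on the star
  have hSF_contOn : ContinuousOn SF StarT := by
    intro a ha
    by_cases h1 : (a.2 : T → ℝ) e = 1
    · -- apex point
      have hκv : κ a.2 a.1 = p := by
        simp only [hκ]
        rw [dif_neg]
        intro hc
        exact hc.1 h1
      have hval : SF a = ((1 - (a.1:ℝ)) • dirac e + ((a.1:ℝ)) • ((p : ↥(cx Lk)) : T → ℝ)) := by
        funext q
        simp only [hSF, hκv, Pi.add_apply, Pi.smul_apply, smul_eq_mul, h1, mul_one]
        ring
      show Filter.Tendsto SF (nhdsWithin a StarT) (nhds (SF a))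
      rw [hval]
      have hT1 : Filter.Tendsto (fun a' : ↥unitInterval × ↥(cx V) =>
          ((1 - (a'.1:ℝ)) * ((a'.2 : T→ℝ) e)) • dirac e) (nhdsWithin a StarT)
          (nhds ((1 - (a.1:ℝ)) • dirac e)) := by
        have hcont : Continuous (fun a' : ↥unitInterval × ↥(cx V) =>
            ((1 - (a'.1:ℝ)) * ((a'.2 : T→ℝ) e)) • dirac e) := hc1.smul continuous_const
        have hv : ((1 - (a.1:ℝ)) * ((a.2 : T→ℝ) e)) • dirac e
            = (1 - (a.1:ℝ)) • (dirac e : T → ℝ) := by rw [h1, mul_one]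
        have h := (hcont.continuousAt (x := a)).continuousWithinAt (s := StarT)
        rw [ContinuousWithinAt, hv] at h
        exact h
      have hcoefc : Continuous (fun a' : ↥unitInterval × ↥(cx V) =>
          (1 - (1 - (a'.1:ℝ)) * ((a'.2 : T→ℝ) e))) := continuous_const.sub hc1
      have hT2 : Filter.Tendsto (fun a' : ↥unitInterval × ↥(cx V) =>
          (1 - (1 - (a'.1:ℝ)) * ((a'.2 : T→ℝ) e)) • ((κ a'.2 a'.1 : ↥(cx Lk)) : T → ℝ))
          (nhdsWithin a StarT) (nhds (((a.1:ℝ)) • ((p : ↥(cx Lk)) : T → ℝ))) := by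
        have hcoefT : Filter.Tendsto (fun a' : ↥unitInterval × ↥(cx V) =>
            (1 - (1 - (a'.1:ℝ)) * ((a'.2 : T→ℝ) e))) (nhdsWithin a StarT)
            (nhds ((a.1:ℝ))) := by
          have h := (hcoefc.continuousAt (x := a)).continuousWithinAt (s := StarT)
          rw [ContinuousWithinAt] at h
          have hv : (1 - (1 - (a.1:ℝ)) * ((a.2 : T→ℝ) e)) = ((a.1:ℝ)) := by
            rw [h1]; ring
          rw [hv] at h
          exact h
        rcases eq_or_lt_of_le (a.1.2.1) with h0 | h0
        · -- t₀ = 0 : squeeze coordinatewise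
          rw [tendsto_pi_nhds]
          intro q
          have hup : ∀ a' : ↥unitInterval × ↥(cx V),
              (1 - (1 - (a'.1:ℝ)) * ((a'.2 : T→ℝ) e)) * ((κ a'.2 a'.1 : ↥(cx Lk)) : T → ℝ) q
              ≤ (1 - (1 - (a'.1:ℝ)) * ((a'.2 : T→ℝ) e)) := by
            intro a'
            have hc0 : 0 ≤ 1 - (1 - (a'.1:ℝ)) * ((a'.2 : T→ℝ) e) := by
              have ht1 : (a'.1 : ℝ) ≤ 1 := a'.1.2.2
              have ht0 : (0:ℝ) ≤ (a'.1 : ℝ) := a'.1.2.1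
              have hs0 : (0:ℝ) ≤ (a'.2 : T → ℝ) e := a'.2.2.1 e
              have hs1 : (a'.2 : T → ℝ) e ≤ 1 := cx_le_one a'.2.2 e
              nlinarith
            have hκ1 : ((κ a'.2 a'.1 : ↥(cx Lk)) : T → ℝ) q ≤ 1 := cx_le_one (κ a'.2 a'.1).2 q
            nlinarith [(κ a'.2 a'.1).2.1 q]
          have hlo : ∀ a' : ↥unitInterval × ↥(cx V),
              (0:ℝ) ≤ (1 - (1 - (a'.1:ℝ)) * ((a'.2 : T→ℝ) e))
                * ((κ a'.2 a'.1 : ↥(cx Lk)) : T → ℝ) q := by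
            intro a'
            have hc0 : 0 ≤ 1 - (1 - (a'.1:ℝ)) * ((a'.2 : T→ℝ) e) := by
              have ht1 : (a'.1 : ℝ) ≤ 1 := a'.1.2.2
              have ht0 : (0:ℝ) ≤ (a'.1 : ℝ) := a'.1.2.1
              have hs0 : (0:ℝ) ≤ (a'.2 : T → ℝ) e := a'.2.2.1 e
              have hs1 : (a'.2 : T → ℝ) e ≤ 1 := cx_le_one a'.2.2 e
              nlinarith
            exact mul_nonneg hc0 ((κ a'.2 a'.1).2.1 q)
          have hval0 : (((a.1:ℝ)) • ((p : ↥(cx Lk)) : T → ℝ)) q = 0 := by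
            simp only [Pi.smul_apply, smul_eq_mul, ← h0]
            ring
          rw [hval0]
          have hcoef0 : Filter.Tendsto (fun a' : ↥unitInterval × ↥(cx V) =>
              (1 - (1 - (a'.1:ℝ)) * ((a'.2 : T→ℝ) e))) (nhdsWithin a StarT) (nhds 0) := by
            rw [← h0] at hcoefT
            exact hcoefT
          refine tendsto_of_tendsto_of_tendsto_of_le_of_le' tendsto_const_nhds hcoef0 ?_ ?_
          · exact Filter.Eventually.of_forall (fun a' => hlo a')
          · exact Filter.Eventually.of_forall (fun a' => hup a')
        · -- 0 < t₀ : eventually κ = p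
          have hcc : (1 : ℝ) / (1 + (a.1:ℝ)/2) < 1 := by
            rw [div_lt_one (by linarith)]
            linarith
          have hev_t : ∀ᶠ a' in nhdsWithin a StarT, (a.1:ℝ)/2 < (a'.1:ℝ) :=
            Filter.Eventually.filter_mono nhdsWithin_le_nhds
              ((htc.tendsto a).eventually (eventually_gt_nhds (by linarith)))
          have hev_s : ∀ᶠ a' in nhdsWithin a StarT,
              (1:ℝ)/(1 + (a.1:ℝ)/2) < ((a'.2 : T→ℝ) e) := by
            have h := (hsc.tendsto a)
            rw [h1] at h
            exact Filter.Eventually.filter_mono nhdsWithin_le_nhds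
              (h.eventually (eventually_gt_nhds hcc))
          have hev_in : ∀ᶠ a' in nhdsWithin a StarT, a' ∈ StarT := eventually_mem_nhdsWithin
          have hev : ∀ᶠ a' in nhdsWithin a StarT,
              ((κ a'.2 a'.1 : ↥(cx Lk)) : T → ℝ) = ((p : ↥(cx Lk)) : T → ℝ) := by
            filter_upwards [hev_t, hev_s, hev_in] with a' h1' h2' h3'
            by_cases he1 : (a'.2 : T → ℝ) e = 1
            · have hv : κ a'.2 a'.1 = p := by
                simp only [hκ]
                rw [dif_neg]
                intro hc'
                exact hc'.1 he1
              rw [hv]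
            · have hsp' := (hStarT_iff _).mp h3'
              have hs1 : ((a'.2 : T→ℝ)) e < 1 := lt_of_le_of_ne (cx_le_one a'.2.2 e) he1
              have hden : (0:ℝ) < 1 - (a'.2 : T→ℝ) e := by linarith
              have hs'0 : (0:ℝ) < ((a'.2 : T→ℝ)) e := by
                have : (0:ℝ) < 1/(1 + (a.1:ℝ)/2) := by positivity
                linarith
              have h4 : 1 < ((a'.2 : T→ℝ) e) * (1 + (a.1:ℝ)/2) := by
                rw [div_lt_iff₀ (by linarith)] at h2'
                linarith
              have h5 : ((a'.2 : T→ℝ) e) * ((a.1:ℝ)/2) ≤ ((a'.2 : T→ℝ) e) * ((a'.1 : ℝ)) :=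
                mul_le_mul_of_nonneg_left (le_of_lt h1') hs'0.le
              have hst : 1 - ((a'.2 : T→ℝ) e) ≤ ((a'.2 : T→ℝ) e) * ((a'.1 : ℝ)) := by
                nlinarith
              have hψ1 : (⟨ψf ((a'.2 : T → ℝ)) ((a'.1 : ℝ)), hψ_mem a'.2.2 a'.1.2.1⟩
                  : ↥unitInterval) = 1 := by
                apply Subtype.ext
                simp only [hψf, Set.Icc.coe_one]
                apply min_eq_left
                rw [le_div_iff₀ hden]
                linarith
              simp only [hκ]
              rw [dif_pos ⟨he1, hsp'⟩, hψ1, K.apply_one]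
              rfl
          have hlim : Filter.Tendsto (fun a' : ↥unitInterval × ↥(cx V) =>
              (1 - (1 - (a'.1:ℝ)) * ((a'.2 : T→ℝ) e)) • ((p : ↥(cx Lk)) : T → ℝ))
              (nhdsWithin a StarT) (nhds (((a.1:ℝ)) • ((p : ↥(cx Lk)) : T → ℝ))) :=
            hcoefT.smul tendsto_const_nhds
          refine hlim.congr' ?_
          filter_upwards [hev] with a' ha'
          rw [ha']
      have := hT1.add hT2
      show Filter.Tendsto SF (nhdsWithin a StarT)
        (nhds ((1 - (a.1:ℝ)) • dirac e + ((a.1:ℝ)) • ((p : ↥(cx Lk)) : T → ℝ)))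
      have hSFeq : SF = fun a' : ↥unitInterval × ↥(cx V) =>
          ((1 - (a'.1:ℝ)) * ((a'.2 : T→ℝ) e)) • dirac e
          + (1 - (1 - (a'.1:ℝ)) * ((a'.2 : T→ℝ) e)) • ((κ a'.2 a'.1 : ↥(cx Lk)) : T → ℝ) := hSF
      rw [hSFeq]
      exact this
    · -- away from the apex
      have hU' : U ∈ nhds a := hUopen.mem_nhds h1
      have hκCWA : ContinuousWithinAt
          (fun a : ↥unitInterval × ↥(cx V) => ((κ a.2 a.1 : ↥(cx Lk)) : T → ℝ)) StarT a :=
        (continuousWithinAt_inter hU').mp (hκ_contOn a ⟨ha, h1⟩)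
      have hgoal : ContinuousWithinAt SF StarT a := by
        have hSFeq : SF = fun a' : ↥unitInterval × ↥(cx V) =>
            ((1 - (a'.1:ℝ)) * ((a'.2 : T→ℝ) e)) • dirac e
            + (1 - (1 - (a'.1:ℝ)) * ((a'.2 : T→ℝ) e)) • ((κ a'.2 a'.1 : ↥(cx Lk)) : T → ℝ) := hSF
        rw [hSFeq]
        exact ((hc1.continuousWithinAt).smul continuousWithinAt_const).add
          (((continuous_const.sub hc1).continuousWithinAt).smul hκCWA)
      exact hgoal
  -- continuity of F
  have hclosure_sub : closure {a : ↥unitInterval × ↥(cx V) | ¬ ((a.2 : T → ℝ) e = 0)}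
      ⊆ StarT := by
    apply closure_minimal ?_ hStarT_closed
    intro a ha
    exact (hStarT_iff a).mpr (hstar_of_ne a.2.2 ha)
  have hFcont : Continuous F := by
    rw [← continuousOn_univ]
    have hFeq : F = fun a : ↥unitInterval × ↥(cx V) =>
        if (a.2 : T → ℝ) e = 0 then ((a.2 : T → ℝ)) else SF a := hF
    rw [hFeq]
    refine ContinuousOn.if ?_ ?_ ?_
    · intro a ha
      have hfr := ha.2
      rw [frontier_eq_closure_inter_closure] at hfr
      have hcl : IsClosed {a : ↥unitInterval × ↥(cx V) | (a.2 : T → ℝ) e = 0} :=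
        isClosed_eq hsc continuous_const
      have h0 : (a.2 : T → ℝ) e = 0 := by
        have h := hfr.1
        rw [hcl.closure_eq] at h
        exact h
      have hstar : a ∈ StarT := hclosure_sub hfr.2
      exact (hSF_id a h0 ((hStarT_iff a).mp hstar)).symm
    · exact ((continuous_subtype_val.comp continuous_snd)).continuousOn
    · exact hSF_contOn.mono (fun a ha => hclosure_sub ha.2)
  -- assembly
  have H1 : (ContinuousMap.id ↥(cx V)).Homotopy
      (ContinuousMap.comp ⟨Set.inclusion hince, continuous_inclusion hince⟩
        ⟨fun w => ⟨F (1, w), hF_one_mem w⟩,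
          (hFcont.comp (continuous_const.prodMk continuous_id)).subtype_mk _⟩) := by
    refine ContinuousMap.Homotopy.mk ⟨fun a => ⟨F a, hFmem a⟩, hFcont.subtype_mk _⟩ ?_ ?_
    · intro w
      exact Subtype.ext (hF_zero w)
    · intro w
      rfl
  have H2 : (ContinuousMap.comp ⟨Set.inclusion hince, continuous_inclusion hince⟩
        ⟨fun w => ⟨F (1, w), hF_one_mem w⟩,
          (hFcont.comp (continuous_const.prodMk continuous_id)).subtype_mk _⟩).Homotopy
      (ContinuousMap.const _ (Set.inclusion hince p₂)) := by
    refine ContinuousMap.Homotopy.mk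
      ⟨fun a => Set.inclusion hince (M (a.1, ⟨F (1, a.2), hF_one_mem a.2⟩)), ?_⟩ ?_ ?_
    · refine (continuous_inclusion hince).comp (M.continuous.comp ?_)
      refine continuous_fst.prodMk ?_
      refine Continuous.subtype_mk ?_ _
      exact hFcont.comp (continuous_const.prodMk (continuous_id.comp continuous_snd))
    · intro w
      have := M.apply_zero (⟨F (1, w), hF_one_mem w⟩ : ↥(cx (V \ {e})))
      simp only [ContinuousMap.id_apply] at this
      simp only [this]
      rfl
    · intro w
      have := M.apply_one (⟨F (1, w), hF_one_mem w⟩ : ↥(cx (V \ {e})))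
      simp only [ContinuousMap.const_apply] at this
      simp only [this]
      rfl
  exact ⟨Set.inclusion hince p₂, ⟨H1.trans H2⟩⟩


section Main

/-- the proper part of `L` with the complements of `y` removed -/
abbrev Tsub (L : Type) [Lattice L] [BoundedOrder L] (y : L) : Type :=
  {x : L // x ≠ ⊥ ∧ x ≠ ⊤ ∧ ¬(x ⊔ y = ⊤ ∧ x ⊓ y = ⊥)}

variable {L : Type} [Lattice L] [BoundedOrder L] [Fintype L]

open Classical in
lemma main_ind (y : L) (hy₀ : y ≠ ⊥) (hy₁ : y ≠ ⊤)
    [Fintype (Tsub L y)] :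
    ∀ (n : ℕ) (V : Set (Tsub L y)),
      {v : Tsub L y | ¬ ((v : L) ⊔ y = ⊤)} ⊆ V →
      (V ∩ {v | (v : L) ⊔ y = ⊤}).ncard = n →
      (ContinuousMap.id ↥(cx V)).Nullhomotopic := by
  set E : Set (Tsub L y) := {v | (v : L) ⊔ y = ⊤} with hE
  intro n
  induction n using Nat.strong_induction_on with
  | _ n IH =>
  intro V hEc hcard
  by_cases hne : (V ∩ E).Nonempty
  · -- inductive step : remove a minimal element of V ∩ E
    obtain ⟨e, heF, hminF⟩ := Finset.exists_minimal (s := (V ∩ E).toFinite.toFinset)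
      (by rwa [Set.Finite.toFinset_nonempty])
    rw [Set.Finite.mem_toFinset] at heF
    have heV : e ∈ V := heF.1
    have heE : (e : L) ⊔ y = ⊤ := heF.2
    have hminV : ∀ b : Tsub L y, b ∈ V → (b : L) ⊔ y = ⊤ → ¬ (b < e) := by
      intro b hbV hbE hblt
      exact absurd hblt (not_lt_of_ge (hminF (show b ∈ (V ∩ E).toFinite.toFinset by rw [Set.Finite.mem_toFinset]; exact ⟨hbV, hbE⟩) hblt.le))
    have he_inf : (e : L) ⊓ y ≠ ⊥ := fun h => e.2.2.2 ⟨heE, h⟩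
    -- the cone point of the link
    have hz₁mem : (e : L) ⊓ y ≠ ⊥ ∧ (e : L) ⊓ y ≠ ⊤ ∧
        ¬(((e : L) ⊓ y) ⊔ y = ⊤ ∧ ((e : L) ⊓ y) ⊓ y = ⊥) := by
      refine ⟨he_inf, ?_, ?_⟩
      · intro h
        have h2 : (⊤:L) ≤ y := le_trans (le_of_eq h.symm) inf_le_right
        exact hy₁ (top_le_iff.mp h2)
      · intro hc
        apply he_inf
        have h2 := hc.2
        rwa [inf_assoc, inf_idem] at h2
    set z₁ : Tsub L y := ⟨(e : L) ⊓ y, hz₁mem⟩ with hz₁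
    have hz₁Ec : ¬((z₁ : L) ⊔ y = ⊤) := by
      show ¬(((e : L) ⊓ y) ⊔ y = ⊤)
      rw [sup_eq_right.mpr (inf_le_right : (e : L) ⊓ y ≤ y)]
      exact hy₁
    have hz₁V : z₁ ∈ V := hEc hz₁Ec
    have hz₁lt : z₁ < e := by
      refine Subtype.coe_lt_coe.mp ?_
      refine lt_of_le_of_ne inf_le_left ?_
      intro h
      have he_le : (e : L) ≤ y := inf_eq_left.mp h
      rw [sup_eq_right.mpr he_le] at heE
      exact hy₁ heE
    -- the link poset
    set Lk : Set (Tsub L y) := {x | x ∈ V ∧ (x < e ∨ e < x)} with hLkdef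
    -- below-e elements of the link are not in E
    have hLk_not_E : ∀ x : Tsub L y, x ∈ Lk → x < e → ¬((x : L) ⊔ y = ⊤) := by
      intro x hx hlt hxE
      exact hminV x hx.1 hxE hlt
    -- the conical map on the link
    have hGmem : ∀ (x : Tsub L y), x < e → ((x : L) ⊔ ((e : L) ⊓ y)) ≠ ⊥ ∧
        ((x : L) ⊔ ((e : L) ⊓ y)) ≠ ⊤ ∧
        ¬(((x : L) ⊔ ((e : L) ⊓ y)) ⊔ y = ⊤ ∧ ((x : L) ⊔ ((e : L) ⊓ y)) ⊓ y = ⊥) := by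
      intro x hlt
      have hle : (x : L) ⊔ ((e : L) ⊓ y) ≤ (e : L) :=
        sup_le (Subtype.coe_le_coe.mpr hlt.le) inf_le_left
      refine ⟨?_, ?_, ?_⟩
      · intro hb
        have h2 : (e : L) ⊓ y ≤ ⊥ := le_trans le_sup_right (le_of_eq hb)
        exact he_inf (le_bot_iff.mp h2)
      · intro ht
        have h2 : (⊤:L) ≤ (e : L) := le_trans (le_of_eq ht.symm) hle
        exact e.2.2.1 (top_le_iff.mp h2)
      · intro hc
        have h2 : (e : L) ⊓ y ≤ ⊥ :=
          le_trans (le_inf le_sup_right inf_le_right) (le_of_eq hc.2)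
        exact he_inf (le_bot_iff.mp h2)
    set G : Tsub L y → Tsub L y := fun x =>
      if h : x < e then ⟨(x : L) ⊔ ((e : L) ⊓ y), hGmem x h⟩ else x with hG
    -- key identity : (x ⊔ (e ⊓ y)) ⊔ y = x ⊔ y
    have hkey : ∀ x : L, (x ⊔ ((e : L) ⊓ y)) ⊔ y = x ⊔ y := by
      intro x
      rw [sup_assoc, sup_eq_right.mpr (inf_le_right : (e : L) ⊓ y ≤ y)]
    have hGlt : ∀ x : Tsub L y, x ∈ Lk → (h : x < e) →
        (⟨(x : L) ⊔ ((e : L) ⊓ y), hGmem x h⟩ : Tsub L y) < e := by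
      intro x hx h
      refine Subtype.coe_lt_coe.mp ?_
      refine lt_of_le_of_ne (sup_le (Subtype.coe_le_coe.mpr h.le) inf_le_left) ?_
      intro habs
      have habs' : (x : L) ⊔ ((e : L) ⊓ y) = (e : L) := habs
      have h9 : ((x : L) ⊔ ((e : L) ⊓ y)) ⊔ y = ⊤ := by rw [habs']; exact heE
      have h10 : (x : L) ⊔ y = ⊤ := by rw [← hkey (x : L)]; exact h9
      exact hLk_not_E x hx h h10
    have hGV' : ∀ x : Tsub L y, x ∈ Lk → (h : x < e) →
        (⟨(x : L) ⊔ ((e : L) ⊓ y), hGmem x h⟩ : Tsub L y) ∈ V := by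
      intro x hx h
      apply hEc
      show ¬(((x : L) ⊔ ((e : L) ⊓ y)) ⊔ y = ⊤)
      rw [hkey x]
      exact hLk_not_E x hx h
    have hlink : (ContinuousMap.id ↥(cx Lk)).Nullhomotopic := by
      apply conical_nullhomotopic Lk z₁ ⟨hz₁V, Or.inl hz₁lt⟩ G
      · -- maps Lk into Lk
        intro v hv
        simp only [hG]
        split
        · rename_i h
          exact ⟨hGV' v hv h, Or.inl (hGlt v hv h)⟩
        · exact hv
      · -- monotone on Lk
        intro a ha b hb hab
        simp only [hG]
        split <;> split
        · rename_i h1 h2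
          refine Subtype.coe_le_coe.mp ?_
          exact sup_le_sup_right (Subtype.coe_le_coe.mpr hab) _
        · rename_i h1 h2
          have hbe : e < b := hb.2.resolve_left h2
          refine Subtype.coe_le_coe.mp ?_
          calc (a : L) ⊔ ((e : L) ⊓ y)
              ≤ (e : L) := sup_le (Subtype.coe_le_coe.mpr h1.le) inf_le_left
            _ ≤ (b : L) := Subtype.coe_le_coe.mpr hbe.le
        · rename_i h1 h2
          have hea : e < a := ha.2.resolve_left h1
          exact absurd ((hea.trans_le hab).trans h2) (lt_irrefl e)
        · exact hab
      · -- dominates the identity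
        intro v hv
        simp only [hG]
        split
        · exact Subtype.coe_le_coe.mp le_sup_left
        · exact le_rfl
      · -- dominates the cone point
        intro v hv
        simp only [hG]
        split
        · exact Subtype.coe_le_coe.mp le_sup_right
        · rename_i h
          have hev : e < v := hv.2.resolve_left h
          exact (hz₁lt.trans hev).le
    -- the smaller complex
    have hVE_fin : (V ∩ E).Finite := Set.toFinite _
    have hn_pos : 0 < n := by
      rw [← hcard]
      exact (Set.ncard_pos hVE_fin).mpr hne
    have hV'E : (V \ {e}) ∩ E = (V ∩ E) \ {e} := by
      ext x
      simp only [Set.mem_inter_iff, Set.mem_diff, Set.mem_singleton_iff]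
      tauto
    have hcard' : ((V \ {e}) ∩ E).ncard = n - 1 := by
      rw [hV'E, Set.ncard_diff_singleton_of_mem heF, hcard]
    have hEc' : {v : Tsub L y | ¬ ((v : L) ⊔ y = ⊤)} ⊆ V \ {e} := by
      intro v hv
      refine ⟨hEc hv, ?_⟩
      intro hveq
      rw [Set.mem_singleton_iff] at hveq
      subst hveq
      exact hv heE
    have hrest := IH (n - 1) (Nat.sub_lt hn_pos Nat.one_pos) (V \ {e}) hEc' hcard'
    exact collapse V e heV hlink hrest
  · -- base case : V = Ec, conically contractible via x ↦ x ⊔ y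
    have hVEc : V = {v : Tsub L y | ¬ ((v : L) ⊔ y = ⊤)} := by
      apply Set.Subset.antisymm
      · intro v hv
        by_contra hvE
        rw [Set.mem_setOf_eq, not_not] at hvE
        exact hne ⟨v, hv, hvE⟩
      · exact hEc
    have hzmem : y ≠ ⊥ ∧ y ≠ ⊤ ∧ ¬(y ⊔ y = ⊤ ∧ y ⊓ y = ⊥) := by
      refine ⟨hy₀, hy₁, ?_⟩
      intro hc
      rw [sup_idem] at hc
      exact hy₁ hc.1
    set z : Tsub L y := ⟨y, hzmem⟩ with hz
    have hGmem : ∀ (x : Tsub L y), ¬((x : L) ⊔ y = ⊤) → ((x : L) ⊔ y) ≠ ⊥ ∧ ((x : L) ⊔ y) ≠ ⊤ ∧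
        ¬(((x : L) ⊔ y) ⊔ y = ⊤ ∧ ((x : L) ⊔ y) ⊓ y = ⊥) := by
      intro x hx
      refine ⟨?_, hx, ?_⟩
      · intro hb
        have h2 : y ≤ ⊥ := le_trans le_sup_right (le_of_eq hb)
        exact hy₀ (le_bot_iff.mp h2)
      · intro hc
        apply hx
        have h2 := hc.1
        rwa [sup_assoc, sup_idem] at h2
    set G : Tsub L y → Tsub L y := fun x =>
      if h : ¬((x : L) ⊔ y = ⊤) then ⟨(x : L) ⊔ y, hGmem x h⟩ else x with hG
    subst hVEc
    apply conical_nullhomotopic _ z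
      (by show ¬(y ⊔ y = ⊤); rw [sup_idem]; exact hy₁) G
    · intro v hv
      simp only [hG]
      split
      · show ¬(((v : L) ⊔ y) ⊔ y = ⊤)
        rw [sup_assoc, sup_idem]
        exact hv
      · rename_i hcond
        exact absurd hv hcond
    · intro a ha b hb hab
      simp only [hG]
      split <;> split
      · exact Subtype.coe_le_coe.mp (sup_le_sup_right (Subtype.coe_le_coe.mpr hab) _)
      · rename_i h1 h2
        exact absurd hb h2
      · rename_i h1 h2
        exact absurd ha h1
      · exact hab
    · intro v hv
      simp only [hG]
      split
      · exact Subtype.coe_le_coe.mp le_sup_left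
      · exact le_rfl
    · intro v hv
      simp only [hG]
      split
      · exact Subtype.coe_le_coe.mp le_sup_right
      · rename_i hcond
        exact absurd hv hcond

end Main

end BW

/-- Björner–Walker's key lemma: for a finite lattice `L` and `y` in the proper
part `P = L \ {⊥, ⊤}`, the order complex of `P \ Co(y)` (the proper part with
the complements of `y` removed) is contractible. -/
theorem orderComplex_remove_complements_contractible
    {L : Type} [Lattice L] [BoundedOrder L] [Fintype L]
    (y : L) (hy₀ : y ≠ ⊥) (hy₁ : y ≠ ⊤) :
    ContractibleSpace
      ↥(orderComplex {x : L // x ≠ ⊥ ∧ x ≠ ⊤ ∧ ¬(x ⊔ y = ⊤ ∧ x ⊓ y = ⊥)}) := by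
  classical
  letI : Fintype (BW.Tsub L y) := Fintype.ofFinite _
  have heq : orderComplex {x : L // x ≠ ⊥ ∧ x ≠ ⊤ ∧ ¬(x ⊔ y = ⊤ ∧ x ⊓ y = ⊥)}
      = BW.cx (T := BW.Tsub L y) Set.univ := by
    ext w
    constructor
    · rintro ⟨h1, h2, h3, h4⟩
      exact ⟨h1, Set.subset_univ _, by rw [← finsum_eq_sum_of_fintype]; exact h3, h4⟩
    · rintro ⟨h1, h2, h3, h4⟩
      exact ⟨h1, Set.toFinite _, by rw [finsum_eq_sum_of_fintype]; exact h3, h4⟩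
  have hc : ContractibleSpace ↥(BW.cx (T := BW.Tsub L y) Set.univ) :=
    (contractible_iff_id_nullhomotopic _).mpr
      (BW.main_ind y hy₀ hy₁ _ Set.univ (Set.subset_univ _) rfl)
  exact (Homeomorph.setCongr heq).contractibleSpace
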